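/- There exists a finite set Ω′_L of probability measures on {1,…,L}, with |Ω′_L| ≤ 4^{L²}, such that for every n and every L-tuple x ∈ ({0,1}^n)^L we have rad(x) = max over ω ∈ Ω′_L of mrad_ω(x). -/

import Mathlib

open Finset Matrix
namespace Stmt11
noncomputable def avec (L : ℕ) : ((Fin L → Bool) ⊕ (Fin L ⊕ Unit)) → (Fin L → ℝ)
  | .inl T => fun i => if T i then 1 else 0
  | .inr (.inl i) => fun i' => if i' = i then 1 else 0
  | .inr (.inr _) => fun _ => 1
noncomputable def bval (L : ℕ) : ((Fin L → Bool) ⊕ (Fin L ⊕ Unit)) → ℝ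
  | .inl _ => 1/2
  | .inr (.inl _) => 0
  | .inr (.inr _) => 1
abbrev Cc (L : ℕ) := (Fin L → Bool) ⊕ (Fin L ⊕ Unit)
noncomputable def sol (L : ℕ) (f : Fin L → Cc L) : Fin L → ℝ :=
  (Matrix.of fun k i => avec L (f k) i)⁻¹.mulVec fun k => bval L (f k)
open scoped Classical in
noncomputable def Omega' (L : ℕ) : Finset (Fin L → ℝ) :=
  ((Finset.univ : Finset (Fin L → Cc L)).image (sol L)).filter
    (fun ω => (∀ i, 0 ≤ ω i) ∧ ∑ i, ω i = 1)

theorem Omega'_spec {L : ℕ} {ω : Fin L → ℝ} (h : ω ∈ Omega' L) :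
    (∀ i, 0 ≤ ω i) ∧ ∑ i, ω i = 1 := by
  classical
  simpa [Omega'] using (Finset.mem_filter.mp h).2

theorem Omega'_card (L : ℕ) (hL : 0 < L) : (Omega' L).card ≤ 4 ^ (L ^ 2) := by
  classical
  have h1 : (Omega' L).card ≤ (Finset.univ : Finset (Fin L → Cc L)).card :=
    le_trans (Finset.card_filter_le _ _) Finset.card_image_le
  have h2 : (Finset.univ : Finset (Fin L → Cc L)).card = (2 ^ L + (L + 1)) ^ L := by
    simp [Fintype.card_fun, Fintype.card_sum, Fintype.card_fin]
  have h3 : 2 ^ L + (L + 1) ≤ 4 ^ L := by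
    have hlt : L + 1 ≤ 2 ^ L := Nat.lt_two_pow_self
    calc 2 ^ L + (L + 1) ≤ 2 ^ L + 2 ^ L := by omega
    _ = 2 * 2 ^ L := by ring
    _ ≤ 2 ^ L * 2 ^ L := by
        have h2l : 2 ≤ 2 ^ L := Nat.one_lt_two_pow_iff.mpr (by omega)
        exact Nat.mul_le_mul_right _ h2l
    _ = 4 ^ L := by rw [← Nat.mul_pow]
  calc (Omega' L).card ≤ (2 ^ L + (L + 1)) ^ L := by omega
    _ ≤ (4 ^ L) ^ L := Nat.pow_le_pow_left h3 L
    _ = 4 ^ (L ^ 2) := by rw [← Nat.pow_mul, Nat.pow_two]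

def tightSet (L : ℕ) (ω : Fin L → ℝ) : Set (Cc L) :=
  {c | avec L c ⬝ᵥ ω = bval L c}

theorem mem_Omega' {L : ℕ} {ω : Fin L → ℝ} (hω0 : ∀ i, 0 ≤ ω i) (hω1 : ∑ i, ω i = 1)
    (hspan : Submodule.span ℝ (avec L '' tightSet L ω) = ⊤) :
    ω ∈ Omega' L := by
  classical
  -- extract a linearly independent spanning subset
  obtain ⟨s, hsub, hspan2, hind⟩ := exists_linearIndependent ℝ (avec L '' tightSet L ω)
  rw [hspan] at hspan2
  have hfin : s.Finite := hind.setFinite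
  haveI : Fintype s := hfin.fintype
  -- s is a basis
  let B : Module.Basis s ℝ (Fin L → ℝ) := Module.Basis.mk hind (by rw [Subtype.range_coe, hspan2])
  have hcard : Fintype.card s = L := by
    have := Module.finrank_eq_card_basis B
    rw [Module.finrank_fin_fun] at this
    exact this.symm
  obtain ⟨e⟩ : Nonempty (Fin L ≃ s) := by
    refine ⟨(Fintype.equivFinOfCardEq hcard).symm⟩
  -- choose constraint indices
  have hc : ∀ k : Fin L, ∃ c : Cc L, c ∈ tightSet L ω ∧ avec L c = (e k : Fin L → ℝ) := by
    intro k
    obtain ⟨c, hc1, hc2⟩ := hsub (e k).2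
    exact ⟨c, hc1, hc2⟩
  choose f hf1 hf2 using hc
  set M : Matrix (Fin L) (Fin L) ℝ := Matrix.of fun k i => avec L (f k) i with hM
  have hrow : ∀ k, (fun i => M k i) = (e k : Fin L → ℝ) := by
    intro k; funext i; simp [hM, ← hf2 k]
  -- rows are linearly independent
  have hindrow : LinearIndependent ℝ (fun k : Fin L => (fun i => M k i : Fin L → ℝ)) := by
    have : LinearIndependent ℝ (fun k : Fin L => ((e k : Fin L → ℝ))) :=
      hind.comp e e.injective
    simpa only [hrow] using this
  -- determinant nonzero
  have hdet : M.det ≠ 0 := by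
    intro h0
    have h0t : Mᵀ.det = 0 := by rwa [Matrix.det_transpose]
    obtain ⟨v, hv0, hv⟩ := (Matrix.exists_mulVec_eq_zero_iff).mpr h0t
    apply hv0
    have := Fintype.linearIndependent_iff.mp hindrow v ?_
    · funext k; exact this k
    · funext i
      have := congrFun hv i
      simpa [Matrix.mulVec, dotProduct, Finset.sum_apply, mul_comm] using this
  -- ω satisfies the system
  have hsys : M.mulVec ω = fun k => bval L (f k) := by
    funext k
    have := hf1 k
    simpa [Matrix.mulVec, dotProduct, tightSet, hM] using this
  have hsol : sol L f = ω := by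
    unfold sol
    rw [← hM, ← hsys, Matrix.mulVec_mulVec, Matrix.nonsing_inv_mul M (isUnit_iff_ne_zero.mpr hdet), Matrix.one_mulVec]
  rw [Omega']
  simp only [Finset.mem_filter, Finset.mem_image, Finset.mem_univ, true_and]
  exact ⟨⟨f, hsol⟩, hω0, hω1⟩


theorem Omega'_nonempty (L : ℕ) (hL : 0 < L) : (Omega' L).Nonempty := by
  classical
  set i₀ : Fin L := ⟨0, hL⟩
  set δ : Fin L → ℝ := fun i => if i = i₀ then 1 else 0 with hδ
  have hδ0 : ∀ i, 0 ≤ δ i := by intro i; by_cases h : i = i₀ <;> simp [hδ, h]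
  have hδ1 : ∑ i, δ i = 1 := by simp [hδ]
  refine ⟨δ, mem_Omega' hδ0 hδ1 ?_⟩
  have hsum_tight : (Sum.inr (Sum.inr ()) : Cc L) ∈ tightSet L δ := by
    simp [tightSet, avec, bval, dotProduct, hδ1]
  have hcoord_tight : ∀ i : Fin L, i ≠ i₀ → (Sum.inr (Sum.inl i) : Cc L) ∈ tightSet L δ := by
    intro i hi
    simp only [tightSet, avec, bval, dotProduct, Set.mem_setOf_eq, hδ]
    rw [Finset.sum_congr rfl (fun i' _ => by rw [ite_mul, one_mul, zero_mul])]
    rw [Finset.sum_ite_eq' Finset.univ i (fun i' => if i' = i₀ then (1:ℝ) else 0)]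
    simp [if_neg hi]
  have hone : (fun _ => (1:ℝ)) ∈ Submodule.span ℝ (avec L '' tightSet L δ) := by
    apply Submodule.subset_span
    exact ⟨_, hsum_tight, rfl⟩
  have hei : ∀ i : Fin L, Pi.single i (1:ℝ) ∈ Submodule.span ℝ (avec L '' tightSet L δ) := by
    intro i
    by_cases h : i = i₀
    · rw [h]
      have heq : Pi.single i₀ (1:ℝ)
          = (fun _ => (1:ℝ)) - ∑ i' ∈ Finset.univ.erase i₀, Pi.single i' (1:ℝ) := by
        funext j
        by_cases hj : j = i₀
        · rw [hj]
          simp [Pi.single_apply, Finset.sum_apply, Finset.sum_ite_eq]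
        · simp only [Pi.single_apply, Pi.sub_apply, Finset.sum_apply, Pi.one_apply]
          rw [if_neg hj]
          rw [Finset.sum_ite_eq (Finset.univ.erase i₀) j (fun _ => (1:ℝ))]
          simp [Finset.mem_erase, hj]
      rw [heq]
      refine sub_mem hone (Submodule.sum_mem _ ?_)
      intro i' hi'
      apply Submodule.subset_span
      refine ⟨Sum.inr (Sum.inl i'), hcoord_tight i' (Finset.mem_erase.mp hi').1, ?_⟩
      funext j; simp [avec, Pi.single_apply]
    · apply Submodule.subset_span
      refine ⟨Sum.inr (Sum.inl i), hcoord_tight i h, ?_⟩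
      funext j; simp [avec, Pi.single_apply]
  rw [eq_top_iff, ← (Pi.basisFun ℝ (Fin L)).span_eq]
  apply Submodule.span_le.mpr
  rintro _ ⟨i, rfl⟩
  simpa [Pi.basisFun_apply] using hei i


theorem span_dot_eq_zero {L : ℕ} {S : Set (Fin L → ℝ)} {v w : Fin L → ℝ}
    (h : ∀ u ∈ S, u ⬝ᵥ v = 0) (hw : w ∈ Submodule.span ℝ S) : w ⬝ᵥ v = 0 := by
  induction hw using Submodule.span_induction with
  | mem u hu => exact h u hu
  | zero => simp
  | add u w _ _ hu hw => rw [add_dotProduct, hu, hw, add_zero]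
  | smul a u _ hu => rw [smul_dotProduct, hu, smul_zero]

theorem dual_rep {L : ℕ} (ψ : Module.Dual ℝ (Fin L → ℝ)) (w : Fin L → ℝ) :
    ψ w = ∑ i, w i * ψ (Pi.single i 1) := by
  have hw : w = ∑ i, w i • (Pi.single i 1 : Fin L → ℝ) := by
    funext j
    simp only [Finset.sum_apply, Pi.smul_apply, Pi.single_apply, smul_eq_mul, mul_ite,
      mul_one, mul_zero]
    rw [Finset.sum_ite_eq Finset.univ j w]
    simp
  conv_lhs => rw [hw]
  rw [map_sum]
  simp [_root_.map_smul]

theorem coord_dot {L : ℕ} (i : Fin L) (u : Fin L → ℝ) :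
    avec L (Sum.inr (Sum.inl i)) ⬝ᵥ u = u i := by
  simp only [avec, dotProduct, ite_mul, one_mul, zero_mul]
  rw [Finset.sum_ite_eq' Finset.univ i u]
  simp

theorem sum_dot {L : ℕ} (u : Fin L → ℝ) :
    avec L (Sum.inr (Sum.inr ())) ⬝ᵥ u = ∑ i, u i := by
  simp [avec, dotProduct]

theorem vertex (L m : ℕ) (T : Fin m → (Fin L → Bool)) (d : ℕ) :
    ∀ ω : Fin L → ℝ, (∀ i, 0 ≤ ω i) → (∑ i, ω i = 1) →
      L ≤ Module.finrank ℝ (Submodule.span ℝ (avec L '' tightSet L ω)) + d →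
      ∃ ω' ∈ Omega' L,
        (∑ j, min (avec L (Sum.inl (T j)) ⬝ᵥ ω) (1 - avec L (Sum.inl (T j)) ⬝ᵥ ω)) ≤
        (∑ j, min (avec L (Sum.inl (T j)) ⬝ᵥ ω') (1 - avec L (Sum.inl (T j)) ⬝ᵥ ω')) := by
  classical
  induction d with
  | zero =>
    intro ω hω0 hω1 hrank
    refine ⟨ω, mem_Omega' hω0 hω1 ?_, le_refl _⟩
    apply Submodule.eq_top_of_finrank_eq
    rw [Module.finrank_fin_fun]
    refine le_antisymm ?_ ?_
    · have := Submodule.finrank_le (Submodule.span ℝ (avec L '' tightSet L ω))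
      rwa [Module.finrank_fin_fun] at this
    · simpa using hrank
  | succ d ih =>
    intro ω hω0 hω1 hrank
    by_cases hsp : Submodule.span ℝ (avec L '' tightSet L ω) = ⊤
    · refine ⟨ω, mem_Omega' hω0 hω1 hsp, le_refl _⟩
    -- sum constraint is tight
    have hsumt : (Sum.inr (Sum.inr ()) : Cc L) ∈ tightSet L ω := by
      simp [tightSet, sum_dot, hω1, bval]
    -- find a direction v
    obtain ⟨v, hv0, hortho, hslope⟩ :
        ∃ v : Fin L → ℝ, v ≠ 0 ∧ (∀ c ∈ tightSet L ω, avec L c ⬝ᵥ v = 0) ∧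
          0 ≤ ∑ j, (if avec L (Sum.inl (T j)) ⬝ᵥ ω ≤ 1/2 then (1:ℝ) else -1) *
            (avec L (Sum.inl (T j)) ⬝ᵥ v) := by
      obtain ⟨ψ, hψ0, hψ⟩ := Submodule.exists_dual_map_eq_bot_of_lt_top
        (lt_top_iff_ne_top.mpr hsp) inferInstance
      set v : Fin L → ℝ := fun i => ψ (Pi.single i 1) with hv
      have hv0 : v ≠ 0 := by
        intro h
        apply hψ0
        apply LinearMap.ext
        intro w
        rw [dual_rep ψ w]
        have hz : ∀ i, ψ (Pi.single i 1) = 0 := fun i => congrFun h i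
        simp [hz]
      have hortho : ∀ c ∈ tightSet L ω, avec L c ⬝ᵥ v = 0 := by
        intro c hc
        have hmem : avec L c ∈ Submodule.span ℝ (avec L '' tightSet L ω) :=
          Submodule.subset_span ⟨c, hc, rfl⟩
        have h0 : ψ (avec L c) = 0 := by
          have hmm := Submodule.mem_map_of_mem (f := ψ) hmem
          rw [hψ] at hmm
          simpa using hmm
        have hdr := dual_rep ψ (avec L c)
        rw [h0] at hdr
        exact hdr.symm
      rcases le_or_gt 0 (∑ j, (if avec L (Sum.inl (T j)) ⬝ᵥ ω ≤ 1/2 then (1:ℝ) else -1) *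
          (avec L (Sum.inl (T j)) ⬝ᵥ v)) with hs | hs
      · exact ⟨v, hv0, hortho, hs⟩
      · refine ⟨-v, neg_ne_zero.mpr hv0, fun c hc => by rw [dotProduct_neg, hortho c hc, neg_zero], ?_⟩
        have : ∀ j : Fin m, (if avec L (Sum.inl (T j)) ⬝ᵥ ω ≤ 1/2 then (1:ℝ) else -1) *
            (avec L (Sum.inl (T j)) ⬝ᵥ (-v))
            = -((if avec L (Sum.inl (T j)) ⬝ᵥ ω ≤ 1/2 then (1:ℝ) else -1) *
            (avec L (Sum.inl (T j)) ⬝ᵥ v)) := by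
          intro j; rw [dotProduct_neg]; ring
        rw [Finset.sum_congr rfl fun j _ => this j, Finset.sum_neg_distrib]
        linarith
    have hvsum : ∑ i, v i = 0 := by
      have := hortho _ hsumt
      rwa [sum_dot] at this
    -- blocking constraints
    set val : Cc L → ℝ := fun c => avec L c ⬝ᵥ ω with hvaldef
    set dv : Cc L → ℝ := fun c => avec L c ⬝ᵥ v with hdvdef
    set blocking : Cc L → Prop := fun c =>
      match c with
      | Sum.inl _ => (val c < 1/2 ∧ 0 < dv c) ∨ (1/2 < val c ∧ dv c < 0)
      | Sum.inr (Sum.inl _) => dv c < 0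
      | Sum.inr (Sum.inr _) => False
      with hblock
    set ratio : Cc L → ℝ := fun c => (bval L c - val c) / dv c with hratio
    have hBne : ∃ c, blocking c := by
      -- some coordinate of v is negative
      by_contra hno
      push_neg at hno
      apply hv0
      have hvnn : ∀ i, 0 ≤ v i := by
        intro i
        have := hno (Sum.inr (Sum.inl i))
        simp only [hblock] at this
        have hdv : dv (Sum.inr (Sum.inl i)) = v i := by rw [hdvdef]; exact coord_dot i v
        rw [hdv] at this
        linarith [not_lt.mp this]
      funext i
      have : ∀ i ∈ Finset.univ, v i = 0 :=
        (Finset.sum_eq_zero_iff_of_nonneg (fun i _ => hvnn i)).mp hvsum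
      exact this i (Finset.mem_univ i)
    obtain ⟨cstar, hcstarB, hcstarmin⟩ :=
      Finset.exists_min_image (Finset.univ.filter blocking) ratio
        (by obtain ⟨c, hc⟩ := hBne; exact ⟨c, Finset.mem_filter.mpr ⟨Finset.mem_univ c, hc⟩⟩)
    have hcstarblock : blocking cstar := (Finset.mem_filter.mp hcstarB).2
    set tstar : ℝ := ratio cstar with htstar
    have hmin : ∀ c, blocking c → tstar ≤ ratio c := by
      intro c hc
      exact hcstarmin c (Finset.mem_filter.mpr ⟨Finset.mem_univ c, hc⟩)
    -- tstar ≥ 0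
    have htstar0 : 0 ≤ tstar := by
      rw [htstar, hratio]
      rcases cstar with Tc | ic | u
      · have hb : bval L (Sum.inl Tc) = 1/2 := rfl
        rcases hcstarblock with ⟨h1, h2⟩ | ⟨h1, h2⟩
        · apply div_nonneg
          · rw [hb]; linarith
          · linarith
        · rw [div_nonneg_iff]
          right
          constructor
          · rw [hb]; linarith
          · linarith
      · have hvc : val (Sum.inr (Sum.inl ic)) = ω ic := by rw [hvaldef]; exact coord_dot ic ω
        have hblk : dv (Sum.inr (Sum.inl ic)) < 0 := hcstarblock
        have hb : bval L (Sum.inr (Sum.inl ic)) = 0 := rfl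
        rw [div_nonneg_iff]
        right
        constructor
        · rw [hb, hvc]; linarith [hω0 ic]
        · linarith
      · exact absurd hcstarblock (by simp [hblock])
    set ω' : Fin L → ℝ := fun i => ω i + tstar * v i with hω'
    have hval' : ∀ c, avec L c ⬝ᵥ ω' = val c + tstar * dv c := by
      intro c
      rw [hvaldef, hdvdef, hω']
      simp only [dotProduct, Finset.mul_sum]
      rw [← Finset.sum_add_distrib]
      exact Finset.sum_congr rfl fun i _ => by ring
    -- blocking constraints respected at tstar
    have hub : ∀ c, blocking c → 0 < dv c → val c + tstar * dv c ≤ bval L c := by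
      intro c hc hdvc
      have h := hmin c hc
      rw [hratio, le_div_iff₀ hdvc] at h
      linarith
    have hlb : ∀ c, blocking c → dv c < 0 → bval L c ≤ val c + tstar * dv c := by
      intro c hc hdvc
      have h := hmin c hc
      rw [hratio, le_div_iff_of_neg hdvc] at h
      linarith
    -- new point stays in the simplex
    have hω'0 : ∀ i, 0 ≤ ω' i := by
      intro i
      have hdvi : dv (Sum.inr (Sum.inl i)) = v i := coord_dot i v
      have hvali : val (Sum.inr (Sum.inl i)) = ω i := coord_dot i ω
      show 0 ≤ ω i + tstar * v i
      rcases le_or_gt 0 (v i) with hvi | hvi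
      · nlinarith [hω0 i, mul_nonneg htstar0 hvi]
      · have hblk : blocking (Sum.inr (Sum.inl i)) := show dv _ < 0 by rw [hdvi]; exact hvi
        have hlbi := hlb _ hblk (by rw [hdvi]; exact hvi)
        have hb : bval L (Sum.inr (Sum.inl i)) = 0 := rfl
        rw [hb, hvali, hdvi] at hlbi
        linarith
    have hω'1 : ∑ i, ω' i = 1 := by
      show ∑ i, (ω i + tstar * v i) = 1
      rw [Finset.sum_add_distrib, hω1, ← Finset.mul_sum, hvsum]
      ring
    -- old tight constraints remain tight
    have htsub : tightSet L ω ⊆ tightSet L ω' := by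
      intro c hc
      have h1 : avec L c ⬝ᵥ ω' = val c + tstar * dv c := hval' c
      have h2 : dv c = 0 := hortho c hc
      have h3 : val c = bval L c := hc
      show avec L c ⬝ᵥ ω' = bval L c
      rw [h1, h2, h3]; ring
    -- the blocking constraint becomes tight
    have hdvstar : dv cstar ≠ 0 := by
      rcases cstar with Tc | ic | u
      · rcases hcstarblock with ⟨h1, h2⟩ | ⟨h1, h2⟩
        · exact ne_of_gt h2
        · exact ne_of_lt h2
      · exact ne_of_lt hcstarblock
      · exact absurd hcstarblock (by simp [hblock])
    have hstar_tight : cstar ∈ tightSet L ω' := by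
      show avec L cstar ⬝ᵥ ω' = bval L cstar
      have ht : tstar = (bval L cstar - val cstar) / dv cstar := rfl
      rw [hval', ht, div_mul_cancel₀ _ hdvstar]
      ring
    -- span strictly grows
    have hnotin : avec L cstar ∉ Submodule.span ℝ (avec L '' tightSet L ω) := by
      intro hmem
      have hz : avec L cstar ⬝ᵥ v = 0 := by
        refine span_dot_eq_zero ?_ hmem
        rintro _ ⟨c, hc, rfl⟩
        exact hortho c hc
      exact hdvstar hz
    have hlt : Submodule.span ℝ (avec L '' tightSet L ω)
        < Submodule.span ℝ (avec L '' tightSet L ω') := by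
      refine lt_of_le_of_ne (Submodule.span_mono (Set.image_mono htsub)) ?_
      intro heq
      apply hnotin
      rw [heq]
      exact Submodule.subset_span ⟨cstar, hstar_tight, rfl⟩
    have hrank' : L ≤ Module.finrank ℝ (Submodule.span ℝ (avec L '' tightSet L ω')) + d := by
      have := Submodule.finrank_lt_finrank_of_lt hlt
      omega
    -- objective does not decrease
    have hterm : ∀ j : Fin m,
        min (avec L (Sum.inl (T j)) ⬝ᵥ ω') (1 - avec L (Sum.inl (T j)) ⬝ᵥ ω')
        = min (avec L (Sum.inl (T j)) ⬝ᵥ ω) (1 - avec L (Sum.inl (T j)) ⬝ᵥ ω)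
          + tstar * ((if avec L (Sum.inl (T j)) ⬝ᵥ ω ≤ 1/2 then (1:ℝ) else -1) *
            (avec L (Sum.inl (T j)) ⬝ᵥ v)) := by
      intro j
      have hv' : avec L (Sum.inl (T j)) ⬝ᵥ ω'
          = val (Sum.inl (T j)) + tstar * dv (Sum.inl (T j)) := hval' _
      have hb : bval L (Sum.inl (T j)) = 1/2 := rfl
      have hvalj : val (Sum.inl (T j)) = avec L (Sum.inl (T j)) ⬝ᵥ ω := rfl
      have hdvj : dv (Sum.inl (T j)) = avec L (Sum.inl (T j)) ⬝ᵥ v := rfl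
      by_cases hle : avec L (Sum.inl (T j)) ⬝ᵥ ω ≤ 1/2
      · have hval_le : val (Sum.inl (T j)) ≤ 1/2 := by rw [hvalj]; exact hle
        have h2 : val (Sum.inl (T j)) + tstar * dv (Sum.inl (T j)) ≤ 1/2 := by
          rcases le_or_gt (dv (Sum.inl (T j))) 0 with hd | hd
          · nlinarith [mul_nonneg htstar0 (neg_nonneg.mpr hd)]
          · rcases eq_or_lt_of_le hval_le with heq | hlt2
            · have htight : (Sum.inl (T j) : Cc L) ∈ tightSet L ω := by
                show val _ = bval L _
                rw [hb]; exact heq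
              have h0 := hortho _ htight
              rw [← hdvj] at h0
              rw [h0] at hd; linarith
            · have hblk : blocking (Sum.inl (T j)) := Or.inl ⟨hlt2, hd⟩
              have := hub _ hblk hd
              rw [hb] at this; linarith
        rw [hv', if_pos hle, one_mul]
        rw [min_eq_left (by linarith :
            val (Sum.inl (T j)) + tstar * dv (Sum.inl (T j))
              ≤ 1 - (val (Sum.inl (T j)) + tstar * dv (Sum.inl (T j)))),
          min_eq_left (by linarith :
            avec L (Sum.inl (T j)) ⬝ᵥ ω ≤ 1 - avec L (Sum.inl (T j)) ⬝ᵥ ω)]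
        try simp only [hvalj, hdvj]
        try ring
      · push_neg at hle
        have hval_gt : 1/2 < val (Sum.inl (T j)) := by rw [hvalj]; exact hle
        have h2 : 1/2 ≤ val (Sum.inl (T j)) + tstar * dv (Sum.inl (T j)) := by
          rcases le_or_gt 0 (dv (Sum.inl (T j))) with hd | hd
          · nlinarith [mul_nonneg htstar0 hd]
          · have hblk : blocking (Sum.inl (T j)) := Or.inr ⟨hval_gt, hd⟩
            have := hlb _ hblk hd
            rw [hb] at this; linarith
        rw [hv', if_neg (not_le.mpr hle)]
        rw [min_eq_right (by linarith :
            1 - (val (Sum.inl (T j)) + tstar * dv (Sum.inl (T j)))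
              ≤ val (Sum.inl (T j)) + tstar * dv (Sum.inl (T j))),
          min_eq_right (by linarith :
            1 - avec L (Sum.inl (T j)) ⬝ᵥ ω ≤ avec L (Sum.inl (T j)) ⬝ᵥ ω)]
        try simp only [hvalj, hdvj]
        try ring
    have hGmono : (∑ j, min (avec L (Sum.inl (T j)) ⬝ᵥ ω) (1 - avec L (Sum.inl (T j)) ⬝ᵥ ω))
        ≤ (∑ j, min (avec L (Sum.inl (T j)) ⬝ᵥ ω') (1 - avec L (Sum.inl (T j)) ⬝ᵥ ω')) := by
      have hsum : (∑ j, min (avec L (Sum.inl (T j)) ⬝ᵥ ω') (1 - avec L (Sum.inl (T j)) ⬝ᵥ ω'))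
          = (∑ j, min (avec L (Sum.inl (T j)) ⬝ᵥ ω) (1 - avec L (Sum.inl (T j)) ⬝ᵥ ω))
            + tstar * (∑ j, (if avec L (Sum.inl (T j)) ⬝ᵥ ω ≤ 1/2 then (1:ℝ) else -1) *
              (avec L (Sum.inl (T j)) ⬝ᵥ v)) := by
        rw [Finset.mul_sum, ← Finset.sum_add_distrib]
        exact Finset.sum_congr rfl fun j _ => hterm j
      rw [hsum]
      nlinarith [mul_nonneg htstar0 hslope]
    obtain ⟨ω'', hω''Ω, hG2⟩ := ih ω' hω'0 hω'1 hrank'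
    exact ⟨ω'', hω''Ω, le_trans hGmono hG2⟩


abbrev Yt (n : ℕ) := {y : Fin n → ℝ // ∀ j, 0 ≤ y j ∧ y j ≤ 1}

noncomputable def dd {L n : ℕ} (x : Fin L → Fin n → ℝ) (i : Fin L) (y : Fin n → ℝ) : ℝ :=
  (1 / n : ℝ) * ∑ j, |x i j - y j|

noncomputable def sfun {L n : ℕ} (x : Fin L → Fin n → ℝ) (ω : Fin L → ℝ) (j : Fin n) : ℝ :=
  ∑ i, ω i * x i j

noncomputable def gfun {L n : ℕ} (x : Fin L → Fin n → ℝ) (ω : Fin L → ℝ) : ℝ :=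
  (1 / n : ℝ) * ∑ j, min (sfun x ω j) (1 - sfun x ω j)

instance Yt_nonempty (n : ℕ) : Nonempty (Yt n) :=
  ⟨⟨fun _ => 0, fun _ => ⟨le_refl _, zero_le_one⟩⟩⟩

theorem dd_nonneg {L n : ℕ} (x : Fin L → Fin n → ℝ) (i : Fin L) (y : Fin n → ℝ) :
    0 ≤ dd x i y := by
  unfold dd
  apply mul_nonneg
  · positivity
  · exact Finset.sum_nonneg fun j _ => abs_nonneg _

theorem binary_abs {v y : ℝ} (hv : v = 0 ∨ v = 1) (hy0 : 0 ≤ y) (hy1 : y ≤ 1) :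
    |v - y| = v * (1 - y) + (1 - v) * y := by
  rcases hv with h | h <;> subst h
  · rw [show (0:ℝ) - y = -y by ring, abs_neg, abs_of_nonneg hy0]; ring
  · rw [abs_of_nonneg (by linarith : (0:ℝ) ≤ 1 - y)]; ring

theorem sum_dd {L n : ℕ} (x : Fin L → Fin n → ℝ) (ω : Fin L → ℝ) (y : Fin n → ℝ) :
    ∑ i, ω i * dd x i y = (1 / n : ℝ) * ∑ j, (∑ i, ω i * |x i j - y j|) := by
  unfold dd
  have h1 : ∀ i : Fin L, ω i * ((1 / n : ℝ) * ∑ j, |x i j - y j|)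
      = (1 / n : ℝ) * ∑ j, ω i * |x i j - y j| := by
    intro i
    rw [Finset.mul_sum]
    rw [Finset.mul_sum, Finset.mul_sum]
    exact Finset.sum_congr rfl fun j _ => by ring
  rw [Finset.sum_congr rfl fun i _ => h1 i, ← Finset.mul_sum]
  congr 1
  exact Finset.sum_comm

theorem colsum {L n : ℕ} (x : Fin L → Fin n → ℝ) (hx : ∀ i j, x i j = 0 ∨ x i j = 1)
    (ω : Fin L → ℝ) (hω1 : ∑ i, ω i = 1) (j : Fin n) {yj : ℝ} (hy0 : 0 ≤ yj) (hy1 : yj ≤ 1) :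
    ∑ i, ω i * |x i j - yj| = (1 - yj) * sfun x ω j + yj * (1 - sfun x ω j) := by
  have h1 : ∀ i : Fin L, ω i * |x i j - yj|
      = (1 - yj) * (ω i * x i j) + yj * (ω i - ω i * x i j) := by
    intro i
    rw [binary_abs (hx i j) hy0 hy1]
    ring
  rw [Finset.sum_congr rfl fun i _ => h1 i, Finset.sum_add_distrib, ← Finset.mul_sum,
    ← Finset.mul_sum, Finset.sum_sub_distrib, hω1]
  unfold sfun
  ring

theorem gfun_le {L n : ℕ} (x : Fin L → Fin n → ℝ) (hx : ∀ i j, x i j = 0 ∨ x i j = 1)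
    (ω : Fin L → ℝ) (hω0 : ∀ i, 0 ≤ ω i) (hω1 : ∑ i, ω i = 1) (y : Yt n) :
    gfun x ω ≤ ∑ i, ω i * dd x i y.1 := by
  rw [sum_dd, gfun]
  apply mul_le_mul_of_nonneg_left _ (by positivity)
  apply Finset.sum_le_sum
  intro j _
  rw [colsum x hx ω hω1 j (y.2 j).1 (y.2 j).2]
  have h1 : min (sfun x ω j) (1 - sfun x ω j) ≤ sfun x ω j := min_le_left _ _
  have h2 : min (sfun x ω j) (1 - sfun x ω j) ≤ 1 - sfun x ω j := min_le_right _ _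
  nlinarith [(y.2 j).1, (y.2 j).2]

theorem gfun_attained {L n : ℕ} (x : Fin L → Fin n → ℝ) (hx : ∀ i j, x i j = 0 ∨ x i j = 1)
    (ω : Fin L → ℝ) (hω1 : ∑ i, ω i = 1) :
    ∃ y : Yt n, ∑ i, ω i * dd x i y.1 = gfun x ω := by
  classical
  refine ⟨⟨fun j => if sfun x ω j ≤ 1/2 then 0 else 1, fun j => by dsimp only; split <;> norm_num⟩, ?_⟩
  rw [sum_dd, gfun]
  congr 1
  apply Finset.sum_congr rfl
  intro j _
  show ∑ i, ω i * |x i j - (if sfun x ω j ≤ 1/2 then (0:ℝ) else 1)|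
      = min (sfun x ω j) (1 - sfun x ω j)
  by_cases h : sfun x ω j ≤ 1/2
  · rw [if_pos h]
    rw [colsum x hx ω hω1 j (le_refl (0:ℝ)) zero_le_one, min_eq_left (by linarith)]
    ring
  · rw [if_neg h]
    rw [colsum x hx ω hω1 j zero_le_one (le_refl (1:ℝ)),
      min_eq_right (by push_neg at h; linarith)]
    ring

theorem mrad_le_rad {L n : ℕ} (hL : 0 < L) (x : Fin L → Fin n → ℝ)
    (ω : Fin L → ℝ) (hω0 : ∀ i, 0 ≤ ω i) (hω1 : ∑ i, ω i = 1) :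
    (⨅ y : Yt n, ∑ i, ω i * dd x i y.1) ≤ ⨅ y : Yt n, ⨆ i, dd x i y.1 := by
  haveI : Nonempty (Fin L) := Fin.pos_iff_nonempty.mp hL
  apply ciInf_mono
  · refine ⟨0, ?_⟩
    rintro _ ⟨y, rfl⟩
    exact Finset.sum_nonneg fun i _ => mul_nonneg (hω0 i) (dd_nonneg x i y.1)
  · intro y
    have hb : BddAbove (Set.range fun i => dd x i y.1) := Set.Finite.bddAbove (Set.finite_range _)
    calc ∑ i, ω i * dd x i y.1 ≤ ∑ i, ω i * (⨆ i', dd x i' y.1) := by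
          apply Finset.sum_le_sum
          intro i _
          exact mul_le_mul_of_nonneg_left (le_ciSup hb i) (hω0 i)
      _ = ⨆ i', dd x i' y.1 := by rw [← Finset.sum_mul, hω1, one_mul]

theorem rad_nonneg {L n : ℕ} (hL : 0 < L) (x : Fin L → Fin n → ℝ) :
    0 ≤ ⨅ y : Yt n, ⨆ i, dd x i y.1 := by
  haveI : Nonempty (Fin L) := Fin.pos_iff_nonempty.mp hL
  apply le_ciInf
  intro y
  have hb : BddAbove (Set.range fun i => dd x i y.1) := Set.Finite.bddAbove (Set.finite_range _)
  exact le_trans (dd_nonneg x ⟨0, hL⟩ y.1) (le_ciSup hb ⟨0, hL⟩)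

theorem sep {L n : ℕ} (hL : 0 < L) (x : Fin L → Fin n → ℝ)
    (hx : ∀ i j, x i j = 0 ∨ x i j = 1) :
    ∃ ω : Fin L → ℝ, (∀ i, 0 ≤ ω i) ∧ (∑ i, ω i = 1) ∧
      ∀ y : Yt n, (⨅ y' : Yt n, ⨆ i, dd x i y'.1) ≤ ∑ i, ω i * dd x i y.1 := by
  classical
  haveI : Nonempty (Fin L) := Fin.pos_iff_nonempty.mp hL
  set r : ℝ := ⨅ y' : Yt n, ⨆ i, dd x i y'.1 with hr
  set A : Yt n → (Fin L → ℝ) := fun y i => dd x i y.1 with hA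
  set O : Set (Fin L → ℝ) := {z | ∀ i, z i < r} with hO
  have hbddb : BddBelow (Set.range fun y : Yt n => ⨆ i, dd x i y.1) := by
    refine ⟨0, ?_⟩
    rintro _ ⟨y, rfl⟩
    have hb : BddAbove (Set.range fun i => dd x i y.1) := Set.Finite.bddAbove (Set.finite_range _)
    exact le_trans (dd_nonneg x ⟨0, hL⟩ y.1) (le_ciSup hb ⟨0, hL⟩)
  have hOopen : IsOpen O := by
    have heq : O = ⋂ i, (fun z : Fin L → ℝ => z i) ⁻¹' Set.Iio r := by
      ext z; simp [hO]
    rw [heq]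
    exact isOpen_iInter_of_finite fun i => (continuous_apply i).isOpen_preimage _ isOpen_Iio
  have hOconv : Convex ℝ O := by
    intro z1 h1 z2 h2 a b ha hb hab
    intro i
    show a * z1 i + b * z2 i < r
    rcases ha.eq_or_lt with h0 | h0
    · have hb1 : b = 1 := by linarith
      rw [← h0, hb1]
      simpa using h2 i
    · have e1 : a * z1 i < a * r := mul_lt_mul_of_pos_left (h1 i) h0
      have e2 : b * z2 i ≤ b * r := mul_le_mul_of_nonneg_left (le_of_lt (h2 i)) hb
      have e3 : a * r + b * r = r := by rw [← add_mul, hab, one_mul]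
      linarith
  have hKconv : Convex ℝ (Set.range A) := by
    rintro _ ⟨y1, rfl⟩ _ ⟨y2, rfl⟩ a b ha hb hab
    have hco : ∀ j : Fin n, 0 ≤ a * y1.1 j + b * y2.1 j := by
      intro j
      have := mul_nonneg ha (y1.2 j).1
      have := mul_nonneg hb (y2.2 j).1
      linarith
    have hco1 : ∀ j : Fin n, a * y1.1 j + b * y2.1 j ≤ 1 := by
      intro j
      have e1 : a * y1.1 j ≤ a * 1 := mul_le_mul_of_nonneg_left (y1.2 j).2 ha
      have e2 : b * y2.1 j ≤ b * 1 := mul_le_mul_of_nonneg_left (y2.2 j).2 hb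
      have e3 : a * 1 + b * 1 = 1 := by rw [mul_one, mul_one, hab]
      linarith
    refine ⟨⟨fun j => a * y1.1 j + b * y2.1 j, fun j => ⟨hco j, hco1 j⟩⟩, ?_⟩
    · funext i
      show dd x i _ = (a • A y1 + b • A y2) i
      simp only [Pi.add_apply, Pi.smul_apply, smul_eq_mul, hA]
      unfold dd
      have hj : ∀ j : Fin n, |x i j - (a * y1.1 j + b * y2.1 j)|
          = a * |x i j - y1.1 j| + b * |x i j - y2.1 j| := by
        intro j
        rw [binary_abs (hx i j) (hco j) (hco1 j),
          binary_abs (hx i j) (y1.2 j).1 (y1.2 j).2, binary_abs (hx i j) (y2.2 j).1 (y2.2 j).2]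
        linear_combination (-(x i j)) * hab
      rw [Finset.sum_congr rfl fun j _ => hj j, Finset.sum_add_distrib,
        ← Finset.mul_sum, ← Finset.mul_sum]
      ring
  have hdisj : Disjoint O (Set.range A) := by
    rw [Set.disjoint_left]
    rintro z hzO ⟨y, rfl⟩
    obtain ⟨i0, hi0⟩ := Finite.exists_max (fun i => dd x i y.1)
    have h1 : r ≤ ⨆ i, dd x i y.1 := ciInf_le hbddb y
    have h2 : (⨆ i, dd x i y.1) ≤ dd x i0 y.1 := ciSup_le hi0
    have h3 : A y i0 < r := hzO i0
    rw [hA] at h3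
    simp only at h3
    linarith
  obtain ⟨f, u, hfO, hfK⟩ := geometric_hahn_banach_open hOconv hOopen hKconv hdisj
  set w : Fin L → ℝ := fun i => f (Pi.single i 1) with hw
  have hrep : ∀ z : Fin L → ℝ, f z = ∑ i, z i * w i := by
    intro z
    exact dual_rep (f : (Fin L → ℝ) →ₗ[ℝ] ℝ) z
  set z0 : Fin L → ℝ := fun _ => r - 1 with hz0
  have hz0O : z0 ∈ O := by
    intro i
    show r - 1 < r
    linarith
  have hfz0 : f z0 < u := hfO z0 hz0O
  have hwnn : ∀ i, 0 ≤ w i := by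
    intro i
    by_contra hneg
    push_neg at hneg
    set t : ℝ := (u - f z0) / (-(w i)) with htdef
    have htpos : 0 < t := div_pos (by linarith) (by linarith)
    have hzt : z0 - t • (Pi.single i 1 : Fin L → ℝ) ∈ O := by
      intro i'
      show z0 i' - t * (Pi.single i 1 : Fin L → ℝ) i' < r
      by_cases h : i' = i
      · subst h
        rw [Pi.single_eq_same]
        have : 0 < t * 1 := by linarith
        show r - 1 - t * 1 < r
        linarith
      · rw [Pi.single_eq_of_ne h]
        show r - 1 - t * 0 < r
        linarith
    have hlt := hfO _ hzt
    rw [map_sub, ContinuousLinearMap.map_smul, smul_eq_mul] at hlt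
    have hfe : f (Pi.single i 1) = w i := rfl
    rw [hfe] at hlt
    have ht : t * (-(w i)) = u - f z0 := by
      rw [htdef, div_mul_cancel₀ _ (ne_of_gt (by linarith : (0:ℝ) < -(w i)))]
    nlinarith
  have hS : 0 < ∑ i, w i := by
    rcases (Finset.sum_nonneg (fun i (_ : i ∈ Finset.univ) => hwnn i)).lt_or_eq with h | h
    · exact h
    · exfalso
      have hw0 : ∀ i, w i = 0 := by
        have := (Finset.sum_eq_zero_iff_of_nonneg (fun i _ => hwnn i)).mp h.symm
        exact fun i => this i (Finset.mem_univ i)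
      have y0 : Yt n := Classical.arbitrary _
      have h1 : u ≤ f (A y0) := hfK _ ⟨y0, rfl⟩
      rw [hrep] at h1 hfz0
      simp [hw0] at h1 hfz0
      linarith
  have hru : r * (∑ i, w i) ≤ u := by
    by_contra hc
    push_neg at hc
    set ε : ℝ := (r * (∑ i, w i) - u) / (∑ i, w i) with hε
    have hεpos : 0 < ε := div_pos (by linarith) hS
    have hmem : (fun _ => r - ε) ∈ O := by
      intro i
      show r - ε < r
      linarith
    have hlt := hfO _ hmem
    rw [hrep] at hlt
    have hcalc : ∑ i, (r - ε) * w i = (r - ε) * ∑ i, w i := (Finset.mul_sum _ _ _).symm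
    rw [hcalc] at hlt
    have hεe : ε * (∑ i, w i) = r * (∑ i, w i) - u := by
      rw [hε]; field_simp
    nlinarith
  refine ⟨fun i => w i / (∑ i', w i'), fun i => div_nonneg (hwnn i) hS.le, ?_, ?_⟩
  · rw [← Finset.sum_div]
    field_simp
  · intro y
    have h1 : u ≤ f (A y) := hfK _ ⟨y, rfl⟩
    rw [hrep] at h1
    have hcalc : ∑ i, (w i / (∑ i', w i')) * dd x i y.1
        = (∑ i, A y i * w i) / (∑ i', w i') := by
      rw [Finset.sum_div]
      refine Finset.sum_congr rfl fun i _ => ?_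
      rw [hA]
      show w i / (∑ i', w i') * dd x i y.1 = dd x i y.1 * w i / (∑ i', w i')
      ring
    rw [hcalc, le_div_iff₀ hS]
    calc r * (∑ i', w i') ≤ u := hru
      _ ≤ ∑ i, A y i * w i := h1


theorem gfun_vertex {L n : ℕ} (x : Fin L → Fin n → ℝ) (hx : ∀ i j, x i j = 0 ∨ x i j = 1)
    (ω : Fin L → ℝ) (hω0 : ∀ i, 0 ≤ ω i) (hω1 : ∑ i, ω i = 1) :
    ∃ ω' ∈ Omega' L, gfun x ω ≤ gfun x ω' := by
  classical
  set T : Fin n → (Fin L → Bool) := fun j i => if x i j = 1 then true else false with hT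
  have hdot : ∀ (u : Fin L → ℝ) (j : Fin n), avec L (Sum.inl (T j)) ⬝ᵥ u = sfun x u j := by
    intro u j
    unfold sfun
    simp only [avec, dotProduct]
    refine Finset.sum_congr rfl fun i _ => ?_
    show (if T j i then (1:ℝ) else 0) * u i = u i * x i j
    rcases hx i j with h | h
    · have ht : T j i = false := by
        rw [hT]
        simp only []
        rw [if_neg (by rw [h]; norm_num)]
      rw [ht]
      simp [h]
    · have ht : T j i = true := by
        rw [hT]
        simp only []
        rw [if_pos h]
      rw [ht]
      simp [h]
  obtain ⟨ω', hΩ, hle⟩ := vertex L n T L ω hω0 hω1 (Nat.le_add_left _ _)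
  refine ⟨ω', hΩ, ?_⟩
  unfold gfun
  refine mul_le_mul_of_nonneg_left ?_ (by positivity)
  calc ∑ j, min (sfun x ω j) (1 - sfun x ω j)
      = ∑ j, min (avec L (Sum.inl (T j)) ⬝ᵥ ω) (1 - avec L (Sum.inl (T j)) ⬝ᵥ ω) :=
        Finset.sum_congr rfl fun j _ => by rw [hdot]
    _ ≤ ∑ j, min (avec L (Sum.inl (T j)) ⬝ᵥ ω') (1 - avec L (Sum.inl (T j)) ⬝ᵥ ω') := hle
    _ = ∑ j, min (sfun x ω' j) (1 - sfun x ω' j) :=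
        Finset.sum_congr rfl fun j _ => by rw [hdot]

end Stmt11

/-- there is a finite set `Ω'_L` of probability measures on
`{1,…,L}`, of size at most `4^(L²)`, such that for every `n` and every `L`-tuple
of binary words, `rad(x) = max_{ω ∈ Ω'_L} mrad_ω(x)`. -/
theorem stmt_11 (L : ℕ) (hL : 0 < L) :
    ∃ Ω' : Finset (Fin L → ℝ), Ω'.Nonempty ∧
      (∀ ω ∈ Ω', (∀ i, 0 ≤ ω i) ∧ ∑ i, ω i = 1) ∧
      Ω'.card ≤ 4 ^ (L ^ 2) ∧
      ∀ n : ℕ, 0 < n → ∀ x : Fin L → Fin n → ℝ,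
        (∀ i j, x i j = 0 ∨ x i j = 1) →
        (⨅ y : {y : Fin n → ℝ // ∀ j, 0 ≤ y j ∧ y j ≤ 1},
            ⨆ i, (1 / n : ℝ) * ∑ j, |x i j - y.1 j|)
          = ⨆ ω ∈ Ω',
              ⨅ y : {y : Fin n → ℝ // ∀ j, 0 ≤ y j ∧ y j ≤ 1},
                ∑ i, ω i * ((1 / n : ℝ) * ∑ j, |x i j - y.1 j|) := by
  classical
  open Stmt11 in
  refine ⟨Omega' L, Omega'_nonempty L hL, fun ω h => Omega'_spec h, Omega'_card L hL, ?_⟩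
  intro n hn x hx
  show (⨅ y : Stmt11.Yt n, ⨆ i, Stmt11.dd x i y.1)
      = ⨆ ω ∈ Stmt11.Omega' L, ⨅ y : Stmt11.Yt n, ∑ i, ω i * Stmt11.dd x i y.1
  set r : ℝ := ⨅ y : Stmt11.Yt n, ⨆ i, Stmt11.dd x i y.1 with hr
  have hFle : ∀ ω ∈ Stmt11.Omega' L, (⨅ y : Stmt11.Yt n, ∑ i, ω i * Stmt11.dd x i y.1) ≤ r :=
    fun ω h => Stmt11.mrad_le_rad hL x ω (Stmt11.Omega'_spec h).1 (Stmt11.Omega'_spec h).2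
  obtain ⟨ωs, hs0, hs1, hsep⟩ := Stmt11.sep hL x hx
  have hrg : r ≤ Stmt11.gfun x ωs := by
    obtain ⟨ys, hys⟩ := Stmt11.gfun_attained x hx ωs hs1
    calc r ≤ ∑ i, ωs i * Stmt11.dd x i ys.1 := hsep ys
      _ = Stmt11.gfun x ωs := hys
  obtain ⟨ωv, hωvΩ, hgg⟩ := Stmt11.gfun_vertex x hx ωs hs0 hs1
  have hrF : r ≤ ⨅ y : Stmt11.Yt n, ∑ i, ωv i * Stmt11.dd x i y.1 := by
    apply le_ciInf
    intro y
    calc r ≤ Stmt11.gfun x ωs := hrg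
      _ ≤ Stmt11.gfun x ωv := hgg
      _ ≤ ∑ i, ωv i * Stmt11.dd x i y.1 :=
          Stmt11.gfun_le x hx ωv (Stmt11.Omega'_spec hωvΩ).1 (Stmt11.Omega'_spec hωvΩ).2 y
  have hr0 : 0 ≤ r := hr ▸ Stmt11.rad_nonneg hL x
  apply le_antisymm
  · have hbdd : BddAbove (Set.range fun ω =>
        ⨆ _ : ω ∈ Stmt11.Omega' L, ⨅ y : Stmt11.Yt n, ∑ i, ω i * Stmt11.dd x i y.1) := by
      refine ⟨max r 0, ?_⟩
      rintro _ ⟨ω, rfl⟩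
      dsimp only
      by_cases h : ω ∈ Stmt11.Omega' L
      · rw [ciSup_pos h]
        exact le_max_of_le_left (hFle ω h)
      · haveI : IsEmpty (ω ∈ Stmt11.Omega' L) := ⟨h⟩
        rw [Real.iSup_of_isEmpty]
        exact le_max_right r 0
    calc r ≤ ⨆ _ : ωv ∈ Stmt11.Omega' L, ⨅ y : Stmt11.Yt n, ∑ i, ωv i * Stmt11.dd x i y.1 := by
          rw [ciSup_pos hωvΩ]
          exact hrF
      _ ≤ ⨆ ω, ⨆ _ : ω ∈ Stmt11.Omega' L, ⨅ y : Stmt11.Yt n, ∑ i, ω i * Stmt11.dd x i y.1 :=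
          le_ciSup hbdd ωv
  · apply ciSup_le
    intro ω
    by_cases h : ω ∈ Stmt11.Omega' L
    · rw [ciSup_pos h]
      exact hFle ω h
    · haveI : IsEmpty (ω ∈ Stmt11.Omega' L) := ⟨h⟩
      rw [Real.iSup_of_isEmpty]
      exact hr0
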